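/- For all natural numbers k ≥ 1: ∑_{λ=0}^{k} 2^{k+1} · ((λ+1)^2/(k+1)) · binomial(2k+2, k-λ) = 2^(3k+1). -/

import Mathlib

open Finset

lemma key_step (k j : ℕ) :
    ((k : ℚ) - j) * (Nat.choose (2*k+2) (j+1) : ℚ)
      = ((k : ℚ) + 1) * ((Nat.choose (2*k+1) (j+1) : ℚ) - (Nat.choose (2*k+1) j : ℚ)) := by
  have h1 : (Nat.choose (2*k+2) (j+1) : ℚ)
      = (Nat.choose (2*k+1) j : ℚ) + (Nat.choose (2*k+1) (j+1) : ℚ) := by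
    exact_mod_cast congrArg (Nat.cast : ℕ → ℚ) (Nat.choose_succ_succ (2*k+1) j)
  have h2 : ((2*k+2 : ℕ) : ℚ) * (Nat.choose (2*k+1) j : ℚ)
      = (Nat.choose (2*k+2) (j+1) : ℚ) * ((j:ℚ)+1) := by
    exact_mod_cast congrArg (Nat.cast : ℕ → ℚ) (Nat.add_one_mul_choose_eq (2*k+1) j)
  push_cast at h2
  linear_combination ((k:ℚ)+1) * h1 + h2

lemma partial_sum (k : ℕ) : ∀ j, j ≤ k →
    ∑ m ∈ range (j+1), ((k:ℚ)+1-m)^2 * (Nat.choose (2*k+2) m : ℚ)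
      = ((k:ℚ)+1) * ((∑ m ∈ range (j+1), (Nat.choose (2*k+1) m : ℚ))
          + ((k:ℚ)-j) * (Nat.choose (2*k+1) j : ℚ)) := by
  intro j
  induction j with
  | zero => intro _; simp; ring
  | succ j ih =>
    intro hj
    rw [sum_range_succ, sum_range_succ (f := fun m => (Nat.choose (2*k+1) m : ℚ)),
        ih (Nat.le_of_succ_le hj)]
    have h := key_step k j
    push_cast
    linear_combination ((k:ℚ) - j) * h

theorem spinor_dimension_G2k1_3 (k : ℕ) (hk : 1 ≤ k) :
    ∑ l ∈ Finset.range (k + 1),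
        (2 : ℚ) ^ (k + 1) * (((l : ℚ) + 1) ^ 2 / ((k : ℚ) + 1)) *
          Nat.choose (2 * k + 2) (k - l) =
      2 ^ (3 * k + 1) := by
  have hrefl : ∑ l ∈ range (k+1), (((l:ℚ)+1)^2 * (Nat.choose (2*k+2) (k-l) : ℚ))
      = ∑ m ∈ range (k+1), ((k:ℚ)+1-m)^2 * (Nat.choose (2*k+2) m : ℚ) := by
    rw [← Finset.sum_range_reflect (fun m => ((k:ℚ)+1-m)^2 * (Nat.choose (2*k+2) m : ℚ)) (k+1)]
    apply Finset.sum_congr rfl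
    intro l hl
    have hl' : l ≤ k := Nat.lt_succ_iff.mp (Finset.mem_range.mp hl)
    have : k + 1 - 1 - l = k - l := by omega
    rw [this]
    rw [Nat.cast_sub hl']
    ring
  have hmain : ∑ m ∈ range (k+1), ((k:ℚ)+1-m)^2 * (Nat.choose (2*k+2) m : ℚ)
      = ((k:ℚ)+1) * 4^k := by
    rw [partial_sum k k le_rfl]
    have hs : ∑ m ∈ range (k+1), (Nat.choose (2*k+1) m : ℚ) = 4^k := by
      exact_mod_cast congrArg (Nat.cast : ℕ → ℚ) (Nat.sum_range_choose_halfway k)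
    rw [hs]
    ring
  have hne : ((k:ℚ)+1) ≠ 0 := by positivity
  calc ∑ l ∈ Finset.range (k + 1),
        (2 : ℚ) ^ (k + 1) * (((l : ℚ) + 1) ^ 2 / ((k : ℚ) + 1)) *
          Nat.choose (2 * k + 2) (k - l)
      = (2:ℚ)^(k+1) / ((k:ℚ)+1) * ∑ l ∈ range (k+1),
          (((l:ℚ)+1)^2 * (Nat.choose (2*k+2) (k-l) : ℚ)) := by
        rw [Finset.mul_sum]; apply Finset.sum_congr rfl; intro l _; ring
    _ = (2:ℚ)^(k+1) / ((k:ℚ)+1) * (((k:ℚ)+1) * 4^k) := by rw [hrefl, hmain]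
    _ = 2 ^ (3*k+1) := by
        field_simp
        rw [show (4:ℚ) = 2^2 by norm_num, ← pow_mul,
          show 3*k+1 = (k+1)+2*k by ring, pow_add]
        ring
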